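/- Assume all agents have additive cost functions and let α ≥ 1. Every α-EF allocation is (2α/(α+1))-PMMS. Moreover this bound is tight: for every n ≥ 2 and α ≥ 1 there exists an n-agent instance with additive cost functions, an α-EF allocation A, an agent i and an agent j ≠ i with c_i(A_i) = (2α/(α+1))·MMS_i(2, A_i ∪ A_j). -/

import Mathlib

open Finset

/-- `T` is a `k`-partition of the bundle `S`: pairwise disjoint bundles whose union is `S`. -/
def IsPartitionOf {E : Type*} [DecidableEq E] {k : ℕ} (T : Fin k → Finset E) (S : Finset E) :
    Prop :=
  (∀ i j : Fin k, i ≠ j → Disjoint (T i) (T j)) ∧ Finset.univ.biUnion T = S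

/-- The maximin share of cost function `c` on `S` among `k` agents:
the minimum over `k`-partitions of `S` of the maximum cost of a bundle. -/
noncomputable def MMS {E : Type*} [DecidableEq E] (c : Finset E → ℝ) (k : ℕ) (S : Finset E) :
    ℝ :=
  sInf { m : ℝ | ∃ T : Fin k → Finset E, IsPartitionOf T S ∧ m = ⨆ j : Fin k, c (T j) }

/-- `c` is a nonnegative additive cost function. -/
def AdditiveCost {E : Type*} [DecidableEq E] (c : Finset E → ℝ) : Prop :=
  (∀ S : Finset E, 0 ≤ c S) ∧ ∀ S : Finset E, c S = ∑ e ∈ S, c {e}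

/-- `c` is a nonnegative monotone cost function with `c ∅ = 0`. -/
def MonotoneCost {E : Type*} (c : Finset E → ℝ) : Prop :=
  (∀ S : Finset E, 0 ≤ c S) ∧ c ∅ = 0 ∧ ∀ ⦃S T : Finset E⦄, S ⊆ T → c S ≤ c T

/-- `c` is subadditive. -/
def SubadditiveCost {E : Type*} [DecidableEq E] (c : Finset E → ℝ) : Prop :=
  ∀ S T : Finset E, c (S ∪ T) ≤ c S + c T

/-- `c` is submodular. -/
def SubmodularCost {E : Type*} [DecidableEq E] (c : Finset E → ℝ) : Prop :=
  ∀ S T : Finset E, c (S ∪ T) + c (S ∩ T) ≤ c S + c T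

/-- `A` is an allocation of all chores among the `n` agents. -/
def IsAllocation {E : Type*} [DecidableEq E] [Fintype E] {n : ℕ} (A : Fin n → Finset E) : Prop :=
  IsPartitionOf A Finset.univ

/-- `A` is `α`-envy-free. -/
def IsEF {E : Type*} {n : ℕ} (α : ℝ) (c : Fin n → Finset E → ℝ) (A : Fin n → Finset E) : Prop :=
  ∀ i j, c i (A i) ≤ α * c i (A j)

/-- `A` is `α`-envy-free up to one item. -/
def IsEF1 {E : Type*} [DecidableEq E] {n : ℕ} (α : ℝ) (c : Fin n → Finset E → ℝ)
    (A : Fin n → Finset E) : Prop :=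
  ∀ i j, i ≠ j → A i = ∅ ∨ ∃ e ∈ A i, c i (A i \ {e}) ≤ α * c i (A j)

/-- `A` is `α`-envy-free up to any (positive-cost) item. -/
def IsEFX {E : Type*} [DecidableEq E] {n : ℕ} (α : ℝ) (c : Fin n → Finset E → ℝ)
    (A : Fin n → Finset E) : Prop :=
  ∀ i j, i ≠ j → ∀ e ∈ A i, 0 < c i {e} → c i (A i \ {e}) ≤ α * c i (A j)

/-- `A` is an `α`-MMS allocation. -/
def IsMMSFair {E : Type*} [DecidableEq E] [Fintype E] {n : ℕ} (α : ℝ)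
    (c : Fin n → Finset E → ℝ) (A : Fin n → Finset E) : Prop :=
  ∀ i, c i (A i) ≤ α * MMS (c i) n Finset.univ

/-- `A` is an `α`-PMMS allocation. -/
def IsPMMS {E : Type*} [DecidableEq E] {n : ℕ} (α : ℝ)
    (c : Fin n → Finset E → ℝ) (A : Fin n → Finset E) : Prop :=
  ∀ i j, i ≠ j → c i (A i) ≤ α * MMS (c i) 2 (A i ∪ A j)

/-- The optimal (minimum) social cost over all allocations. -/
noncomputable def OPT {E : Type*} [DecidableEq E] [Fintype E] {n : ℕ}
    (c : Fin n → Finset E → ℝ) : ℝ :=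
  sInf { s : ℝ | ∃ A : Fin n → Finset E, IsAllocation A ∧ s = ∑ i, c i (A i) }

/-! ### Auxiliary lemmas -/

lemma iSup_fin_two (f : Fin 2 → ℝ) : (⨆ j, f j) = max (f 0) (f 1) := by
  apply le_antisymm
  · apply ciSup_le; intro j
    fin_cases j
    · exact le_max_left _ _
    · exact le_max_right _ _
  · apply max_le <;> exact le_ciSup (Set.finite_range f).bddAbove _

lemma partition_two_union {E : Type*} [DecidableEq E] {T : Fin 2 → Finset E} {S : Finset E}
    (h : IsPartitionOf T S) : T 0 ∪ T 1 = S := by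
  rw [← h.2]; ext x
  simp [Finset.mem_biUnion, Fin.exists_fin_two]

lemma additive_union {E : Type*} [DecidableEq E] {c : Finset E → ℝ} (hc : AdditiveCost c)
    {S T : Finset E} (h : Disjoint S T) : c (S ∪ T) = c S + c T := by
  rw [hc.2 (S ∪ T), hc.2 S, hc.2 T, Finset.sum_union h]

lemma MMS_two_bddBelow {E : Type*} [DecidableEq E] {c : Finset E → ℝ} (hc : AdditiveCost c)
    (S : Finset E) :
    BddBelow { m : ℝ | ∃ T : Fin 2 → Finset E, IsPartitionOf T S ∧ m = ⨆ j : Fin 2, c (T j) } := by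
  refine ⟨0, ?_⟩
  rintro m ⟨T, hT, rfl⟩
  rw [iSup_fin_two]
  exact le_max_of_le_left (hc.1 _)

lemma trivial_partition_two {E : Type*} [DecidableEq E] (S : Finset E) :
    IsPartitionOf (fun j : Fin 2 => if j = 0 then S else ∅) S := by
  constructor
  · intro i j hij
    fin_cases i <;> fin_cases j <;> simp_all
  · ext x; simp [Finset.mem_biUnion, Fin.exists_fin_two]

lemma MMS_two_le {E : Type*} [DecidableEq E] {c : Finset E → ℝ} (hc : AdditiveCost c)
    {S : Finset E} {T : Fin 2 → Finset E} (hT : IsPartitionOf T S) :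
    MMS c 2 S ≤ max (c (T 0)) (c (T 1)) :=
  csInf_le (MMS_two_bddBelow hc S) ⟨T, hT, (iSup_fin_two fun j => c (T j)).symm⟩

lemma half_le_MMS_two {E : Type*} [DecidableEq E] {c : Finset E → ℝ} (hc : AdditiveCost c)
    (S : Finset E) : c S / 2 ≤ MMS c 2 S := by
  apply le_csInf
  · exact ⟨_, _, trivial_partition_two S, rfl⟩
  · rintro m ⟨T, hT, rfl⟩
    rw [iSup_fin_two]
    have hd : Disjoint (T 0) (T 1) := hT.1 0 1 (by decide)
    have hsum : c (T 0 ∪ T 1) = c (T 0) + c (T 1) := additive_union hc hd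
    rw [partition_two_union hT] at hsum
    have h0 := le_max_left (c (T 0)) (c (T 1))
    have h1 := le_max_right (c (T 0)) (c (T 1))
    linarith

/-- Item weights for the tight instance. -/
noncomputable def tw (α : ℝ) {m : ℕ} (e : Fin m) : ℝ :=
  if (e : ℕ) = 0 then α + 1 else if (e : ℕ) = 1 then α - 1 else 2

/-- Cost functions for the tight instance: agent 0 is additive with weights `tw`,
everyone else has the zero cost function. -/
noncomputable def tc (α : ℝ) (n : ℕ) (k : Fin n) (S : Finset (Fin (n + 1))) : ℝ :=
  if (k : ℕ) = 0 then ∑ e ∈ S, tw α e else 0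

/-- Owner of each chore in the tight instance. -/
def towner (n : ℕ) (hn : 2 ≤ n) {m : ℕ} (e : Fin m) : Fin n :=
  if (e : ℕ) ≤ 1 then ⟨0, by omega⟩
  else if (e : ℕ) = 2 then ⟨1, by omega⟩
  else ⟨min ((e : ℕ) - 1) (n - 1), by omega⟩

/-- The allocation for the tight instance. -/
def tA (n : ℕ) (hn : 2 ≤ n) (k : Fin n) : Finset (Fin (n + 1)) :=
  Finset.univ.filter (fun e => towner n hn e = k)

lemma tw_nonneg {α : ℝ} (hα : 1 ≤ α) {m : ℕ} (e : Fin m) : 0 ≤ tw α e := by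
  unfold tw; split_ifs <;> linarith

lemma tc_additive {α : ℝ} (hα : 1 ≤ α) (n : ℕ) (k : Fin n) : AdditiveCost (tc α n k) := by
  unfold AdditiveCost tc
  split_ifs with h
  · exact ⟨fun S => Finset.sum_nonneg fun e _ => tw_nonneg hα e,
      fun S => by simp⟩
  · exact ⟨fun S => le_refl 0, fun S => by simp⟩

lemma tc_zero_apply (α : ℝ) {n : ℕ} (h : 0 < n) (U : Finset (Fin (n + 1))) :
    tc α n ⟨0, h⟩ U = ∑ e ∈ U, tw α e := by
  unfold tc
  rw [if_pos]
  rfl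

lemma tA_zero (n : ℕ) (hn : 2 ≤ n) :
    tA n hn ⟨0, by omega⟩ = ({⟨0, by omega⟩, ⟨1, by omega⟩} : Finset (Fin (n + 1))) := by
  ext e
  simp only [tA, Finset.mem_filter, Finset.mem_univ, true_and, Finset.mem_insert,
    Finset.mem_singleton, Fin.ext_iff]
  have he := e.isLt
  unfold towner
  split_ifs <;> (try simp [Fin.ext_iff, Fin.val_mk, -Fin.val_eq_zero_iff]) <;> omega

lemma tA_other (n : ℕ) (hn : 2 ≤ n) (k : Fin n) (hk : (k : ℕ) ≠ 0) :
    ∃ e : Fin (n + 1), 2 ≤ (e : ℕ) ∧ tA n hn k = {e} := by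
  have hkn := k.isLt
  by_cases h1 : (k : ℕ) = 1
  · refine ⟨⟨2, by omega⟩, by simp, ?_⟩
    ext e
    simp only [tA, Finset.mem_filter, Finset.mem_univ, true_and, Finset.mem_singleton,
      Fin.ext_iff]
    have he := e.isLt
    unfold towner
    split_ifs <;> (try simp [Fin.ext_iff, Fin.val_mk, -Fin.val_eq_zero_iff]) <;> omega
  · refine ⟨⟨(k : ℕ) + 1, by omega⟩, show 2 ≤ (k : ℕ) + 1 by omega, ?_⟩
    ext e
    simp only [tA, Finset.mem_filter, Finset.mem_univ, true_and, Finset.mem_singleton,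
      Fin.ext_iff]
    have he := e.isLt
    unfold towner
    split_ifs <;> (try simp [Fin.ext_iff, Fin.val_mk, -Fin.val_eq_zero_iff]) <;> omega

lemma tw_eq_two {α : ℝ} {m : ℕ} {e : Fin m} (h : 2 ≤ (e : ℕ)) : tw α e = 2 := by
  unfold tw
  rw [if_neg (by omega), if_neg (by omega)]

lemma tA_allocation (n : ℕ) (hn : 2 ≤ n) : IsAllocation (tA n hn) := by
  constructor
  · intro i j hij
    rw [Finset.disjoint_left]
    intro e hei hej
    simp only [tA, Finset.mem_filter] at hei hej
    exact hij (hei.2 ▸ hej.2)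
  · ext e
    simp only [Finset.mem_biUnion, Finset.mem_univ, iff_true]
    exact ⟨towner n hn e, by simp [tA]⟩

/-- Proposition 4.2: with additive cost functions, every `α`-EF allocation is
`2α/(α+1)`-PMMS, and this bound is tight. -/
theorem alphaEF_is_PMMS_and_tight :
    (∀ (E : Type) [DecidableEq E] [Fintype E] (n : ℕ), 2 ≤ n → ∀ α : ℝ, 1 ≤ α →
      ∀ c : Fin n → Finset E → ℝ, (∀ i, AdditiveCost (c i)) →
      ∀ A : Fin n → Finset E, IsAllocation A → IsEF α c A →
        IsPMMS (2 * α / (α + 1)) c A) ∧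
    (∀ n : ℕ, 2 ≤ n → ∀ α : ℝ, 1 ≤ α →
      ∃ (m : ℕ) (c : Fin n → Finset (Fin m) → ℝ) (A : Fin n → Finset (Fin m)),
        (∀ i, AdditiveCost (c i)) ∧ IsAllocation A ∧ IsEF α c A ∧
        ∃ i j, i ≠ j ∧
          c i (A i) = (2 * α / (α + 1)) * MMS (c i) 2 (A i ∪ A j)) := by
  constructor
  · intro E _ _ n hn α hα c hc A hA hEF i j hij
    have hαpos : (0:ℝ) < α := lt_of_lt_of_le one_pos hα
    have hd : Disjoint (A i) (A j) := hA.1 i j hij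
    have hM : (c i (A i) + c i (A j)) / 2 ≤ MMS (c i) 2 (A i ∪ A j) := by
      have h := half_le_MMS_two (hc i) (A i ∪ A j)
      rwa [additive_union (hc i) hd] at h
    have h1 : c i (A i) ≤ α * c i (A j) := hEF i j
    rw [div_mul_eq_mul_div, le_div_iff₀ (by linarith : (0:ℝ) < α + 1)]
    nlinarith [hM, h1, hαpos]
  · intro n hn α hα
    have hαpos : (0:ℝ) < α := lt_of_lt_of_le one_pos hα
    have hn0 : 0 < n := by omega
    have hn1 : 1 < n := by omega
    refine ⟨n + 1, tc α n, tA n hn, fun k => tc_additive hα n k, tA_allocation n hn, ?_, ?_⟩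
    · -- α-EF
      intro a b
      by_cases ha : (a : ℕ) = 0
      · have haeq : a = ⟨0, hn0⟩ := Fin.ext ha
        have hv0 : tc α n ⟨0, hn0⟩ (tA n hn ⟨0, hn0⟩) = 2 * α := by
          rw [tA_zero n hn]
          simp [tc, tw, Finset.sum_pair, Fin.ext_iff, -Fin.val_eq_zero_iff]
          ring
        rw [haeq, hv0]
        by_cases hb : (b : ℕ) = 0
        · have hbeq : b = ⟨0, hn0⟩ := Fin.ext hb
          rw [hbeq, hv0]
          nlinarith
        · obtain ⟨g, hg2, hAg⟩ := tA_other n hn b hb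
          rw [hAg]
          simp [tc, tw_eq_two hg2]
          linarith
      · simp [tc, ha]
    · -- tightness
      obtain ⟨f, hf2, hAf⟩ := tA_other n hn ⟨1, hn1⟩ (by simp)
      refine ⟨⟨0, hn0⟩, ⟨1, hn1⟩, by simp [Fin.ext_iff], ?_⟩
      have hadd := tc_additive hα n (⟨0, hn0⟩ : Fin n)
      have hv0 : tc α n ⟨0, hn0⟩ (tA n hn ⟨0, hn0⟩) = 2 * α := by
        rw [tA_zero n hn]
        simp [tc, tw, Finset.sum_pair, Fin.ext_iff, -Fin.val_eq_zero_iff]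
        ring
      have h1f : (⟨1, by omega⟩ : Fin (n + 1)) ≠ f := by
        simp only [ne_eq, Fin.ext_iff, Fin.val_mk]
        omega
      set S : Finset (Fin (n + 1)) := tA n hn ⟨0, hn0⟩ ∪ tA n hn ⟨1, hn1⟩ with hS
      have hSval : S = ({⟨0, by omega⟩, ⟨1, by omega⟩} : Finset (Fin (n + 1))) ∪ {f} := by
        rw [hS, tA_zero n hn, hAf]
      have hcS : tc α n ⟨0, hn0⟩ S = 2 * α + 2 := by
        have hdisj : Disjoint ({⟨0, by omega⟩, ⟨1, by omega⟩} : Finset (Fin (n + 1))) {f} := by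
          simp only [Finset.disjoint_singleton_right, Finset.mem_insert, Finset.mem_singleton,
            Fin.ext_iff, Fin.val_mk]
          omega
        have h01 : (⟨0, by omega⟩ : Fin (n + 1)) ≠ ⟨1, by omega⟩ := by
          simp [Fin.ext_iff]
        rw [hSval, tc_zero_apply α hn0]
        rw [Finset.sum_union hdisj, Finset.sum_pair h01, Finset.sum_singleton, tw_eq_two hf2]
        simp only [tw, Fin.val_mk]
        norm_num
        ring
      have hMMS : MMS (tc α n ⟨0, hn0⟩) 2 S = α + 1 := by
        apply le_antisymm
        · have hpart : IsPartitionOf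
              ![({⟨0, by omega⟩} : Finset (Fin (n + 1))), {⟨1, by omega⟩, f}] S := by
            constructor
            · intro i j hij
              fin_cases i <;> fin_cases j <;>
                simp_all [Finset.disjoint_left, Fin.ext_iff, -Fin.val_eq_zero_iff] <;> omega
            · rw [hSval]
              ext x
              simp [Fin.exists_fin_two]
          have h := MMS_two_le hadd hpart
          have hv1 : tc α n ⟨0, hn0⟩ ({⟨0, by omega⟩} : Finset (Fin (n + 1))) = α + 1 := by
            rw [tc_zero_apply α hn0, Finset.sum_singleton]
            simp only [tw, Fin.val_mk]
            norm_num
          have hv2 : tc α n ⟨0, hn0⟩ ({⟨1, by omega⟩, f} : Finset (Fin (n + 1))) = α + 1 := by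
            rw [tc_zero_apply α hn0, Finset.sum_pair h1f, tw_eq_two hf2]
            simp only [tw, Fin.val_mk]
            norm_num
            ring
          simp only [Matrix.cons_val_zero, Matrix.cons_val_one, Matrix.head_cons] at h
          rw [hv1, hv2, max_self] at h
          exact h
        · have h := half_le_MMS_two hadd S
          rw [hcS] at h
          linarith
      rw [hv0, hMMS, div_mul_cancel₀ _ (show (α : ℝ) + 1 ≠ 0 by linarith)]
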